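/- arXiv:2007.12863 — 6 statements merged into one kernel-verified Lean document; each statement's English description precedes it below -/
import Mathlib

section
/- For pairwise independent events E_1,...,E_m in a probability space, P(⋃_i E_i) ≥ (Σ_i P(E_i)) / (1 + Σ_i P(E_i)). -/
open MeasureTheory ENNReal

theorem union_ge_sum_div_one_add_sum
    {Ω : Type*} [MeasurableSpace Ω] (μ : Measure Ω) [IsProbabilityMeasure μ]
    (m : ℕ) (E : Fin m → Set Ω) (hmeas : ∀ i, MeasurableSet (E i))
    (hpind : ∀ i j, i ≠ j → μ (E i ∩ E j) = μ (E i) * μ (E j)) :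
    μ (⋃ i, E i) ≥ (∑ i, μ (E i)) / (1 + ∑ i, μ (E i)) := by
  set S := ∑ i, μ (E i) with hS
  rcases eq_or_ne S 0 with h0 | hS0
  · simp [h0]
  have hSfin : S ≠ ⊤ := by
    refine ne_top_of_le_ne_top (b := (m : ℝ≥0∞)) (by simp) ?_
    calc S ≤ ∑ _i : Fin m, (1 : ℝ≥0∞) := Finset.sum_le_sum fun i _ => prob_le_one
    _ = m := by simp
  set U := ⋃ i, E i with hU
  have hUmeas : MeasurableSet U := MeasurableSet.iUnion hmeas
  set f : Ω → ℝ≥0∞ := fun ω => ∑ i, (E i).indicator 1 ω with hf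
  set g : Ω → ℝ≥0∞ := U.indicator 1 with hg
  have hfmeas : Measurable f := by
    apply Finset.measurable_sum
    exact fun i _ => (measurable_const.indicator (hmeas i))
  have hgmeas : Measurable g := measurable_const.indicator hUmeas
  -- pointwise : f * g = f
  have hfg : ∀ ω, f ω * g ω = f ω := by
    intro ω
    by_cases hω : ω ∈ U
    · simp [hg, Set.indicator_of_mem hω]
    · have : ∀ i, ω ∉ E i := by
        intro i hi; exact hω (Set.mem_iUnion.mpr ⟨i, hi⟩)
      simp [hf, hg, Set.indicator_of_notMem hω, Set.indicator_of_notMem (this _)]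
  have hintf : ∫⁻ ω, f ω ∂μ = S := by
    rw [hf, lintegral_finset_sum]
    · simp_rw [lintegral_indicator_one (hmeas _)]; rfl
    · exact fun i _ => measurable_const.indicator (hmeas i)
  have hintg2 : ∫⁻ ω, g ω ^ (2:ℝ) ∂μ = μ U := by
    have : ∀ ω, g ω ^ (2:ℝ) = g ω := by
      intro ω
      by_cases hω : ω ∈ U
      · simp [hg, Set.indicator_of_mem hω]
      · simp [hg, Set.indicator_of_notMem hω, ENNReal.rpow_two]
    simp_rw [this]
    exact lintegral_indicator_one hUmeas
  have hintf2 : ∫⁻ ω, f ω ^ (2:ℝ) ∂μ ≤ S + S * S := by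
    have hsq : ∀ ω, f ω ^ (2:ℝ) = ∑ i, ∑ j, (E i ∩ E j).indicator 1 ω := by
      intro ω
      rw [ENNReal.rpow_two, hf, sq, Finset.sum_mul_sum]
      congr 1; ext i; congr 1; ext j
      by_cases hi : ω ∈ E i <;> by_cases hj : ω ∈ E j <;>
        simp [Set.indicator, hi, hj]
    simp_rw [hsq]
    rw [lintegral_finset_sum]
    · have heval : ∀ i : Fin m, ∫⁻ ω, ∑ j, (E i ∩ E j).indicator 1 ω ∂μ
          = ∑ j, μ (E i ∩ E j) := by
        intro i
        rw [lintegral_finset_sum]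
        · simp_rw [lintegral_indicator_one ((hmeas i).inter (hmeas _))]
        · exact fun j _ => measurable_const.indicator ((hmeas i).inter (hmeas j))
      simp_rw [heval]
      calc ∑ i, ∑ j, μ (E i ∩ E j)
          ≤ ∑ i, (μ (E i) + ∑ j, μ (E i) * μ (E j)) := by
            refine Finset.sum_le_sum fun i _ => ?_
            calc ∑ j, μ (E i ∩ E j)
                = μ (E i ∩ E i) + ∑ j ∈ Finset.univ.erase i, μ (E i ∩ E j) :=
                  (Finset.add_sum_erase _ (fun j => μ (E i ∩ E j))
                    (Finset.mem_univ i)).symm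
              _ ≤ μ (E i) + ∑ j, μ (E i) * μ (E j) := by
                  refine add_le_add (measure_mono Set.inter_subset_left) ?_
                  calc ∑ j ∈ Finset.univ.erase i, μ (E i ∩ E j)
                      = ∑ j ∈ Finset.univ.erase i, μ (E i) * μ (E j) := by
                        refine Finset.sum_congr rfl fun j hj => ?_
                        exact hpind i j (Ne.symm (Finset.ne_of_mem_erase hj))
                    _ ≤ ∑ j, μ (E i) * μ (E j) :=
                        Finset.sum_le_sum_of_subset (Finset.subset_univ _)
          _ = S + S * S := by
            rw [Finset.sum_add_distrib]
            simp_rw [← Finset.mul_sum]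
            rw [← Finset.sum_mul, ← hS]
    · intro i _
      exact Finset.measurable_sum _ fun j _ =>
        measurable_const.indicator ((hmeas i).inter (hmeas j))
  -- Cauchy-Schwarz
  have hcs := ENNReal.lintegral_mul_le_Lp_mul_Lq μ (Real.HolderConjugate.two_two : (2:ℝ).HolderConjugate 2)
    hfmeas.aemeasurable hgmeas.aemeasurable
  simp only [Pi.mul_apply, hfg] at hcs
  rw [hintf, hintg2] at hcs
  -- square both sides
  have hsq : S * S ≤ (∫⁻ ω, f ω ^ (2:ℝ) ∂μ) * μ U := by
    calc S * S ≤ ((∫⁻ ω, f ω ^ (2:ℝ) ∂μ) ^ (1/2:ℝ) * μ U ^ (1/2:ℝ)) *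
        ((∫⁻ ω, f ω ^ (2:ℝ) ∂μ) ^ (1/2:ℝ) * μ U ^ (1/2:ℝ)) := mul_le_mul' hcs hcs
      _ = (∫⁻ ω, f ω ^ (2:ℝ) ∂μ) * μ U := by
          rw [mul_mul_mul_comm, ← ENNReal.rpow_add_of_nonneg _ _ (by norm_num) (by norm_num),
            ← ENNReal.rpow_add_of_nonneg _ _ (by norm_num) (by norm_num)]
          norm_num
  have hmain : S * S ≤ (S * (1 + S)) * μ U := by
    calc S * S ≤ (∫⁻ ω, f ω ^ (2:ℝ) ∂μ) * μ U := hsq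
      _ ≤ (S + S * S) * μ U := by gcongr
      _ = (S * (1 + S)) * μ U := by ring_nf
  have hcancel : S ≤ (1 + S) * μ U := by
    rw [mul_assoc] at hmain
    exact (ENNReal.mul_le_mul_iff_right hS0 hSfin).mp hmain
  calc (S : ℝ≥0∞) / (1 + S) ≤ μ U := ENNReal.div_le_of_le_mul' hcancel
    _ = μ U := rfl
end

section
/- For pairwise independent events E_1,...,E_m in a probability space, P(⋃_i E_i) ≥ (1/2)·min{1, Σ_i P(E_i)}. -/
open MeasureTheory
open scoped ENNReal

theorem union_ge_half_min_one_sum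
    {Ω : Type*} [MeasurableSpace Ω] (μ : Measure Ω) [IsProbabilityMeasure μ]
    (m : ℕ) (E : Fin m → Set Ω) (hmeas : ∀ i, MeasurableSet (E i))
    (hpind : ∀ i j, i ≠ j → μ (E i ∩ E j) = μ (E i) * μ (E j)) :
    μ (⋃ i, E i) ≥ (1 / 2) * min 1 (∑ i, μ (E i)) := by
  classical
  set s : ℝ≥0∞ := ∑ i, μ (E i) with hs_def
  set A : Set Ω := ⋃ i, E i with hA_def
  have hAmeas : MeasurableSet A := MeasurableSet.iUnion hmeas
  -- the counting function
  set f : Ω → ℝ≥0∞ := fun ω => ∑ i, (E i).indicator (1 : Ω → ℝ≥0∞) ω with hf_def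
  set g : Ω → ℝ≥0∞ := A.indicator (1 : Ω → ℝ≥0∞) with hg_def
  have hfmeas : Measurable f := by
    apply Finset.measurable_sum
    intro i _
    exact (measurable_one).indicator (hmeas i)
  have hgmeas : Measurable g := (measurable_one).indicator hAmeas
  -- ∫ f = s
  have hint_f : ∫⁻ ω, f ω ∂μ = s := by
    simp only [hf_def]
    rw [lintegral_finset_sum _ (fun i _ => (measurable_one).indicator (hmeas i))]
    simp [lintegral_indicator_one, hmeas, hs_def]
  -- f = f * g
  have hfg : ∀ ω, f ω = (f * g) ω := by
    intro ω
    by_cases hω : ω ∈ A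
    · simp [hg_def, Set.indicator_of_mem hω]
    · have : f ω = 0 := by
        apply Finset.sum_eq_zero
        intro i _
        have : ω ∉ E i := fun h => hω (Set.mem_iUnion.2 ⟨i, h⟩)
        simp [Set.indicator_of_notMem this]
      simp [this, hg_def, Set.indicator_of_notMem hω]
  -- ∫ f² = ∑ i ∑ j μ (E i ∩ E j)
  have hint_f2 : ∫⁻ ω, f ω ^ (2 : ℝ) ∂μ = ∑ i, ∑ j, μ (E i ∩ E j) := by
    have h1 : ∀ ω, f ω ^ (2 : ℝ) = ∑ i, ∑ j, (E i ∩ E j).indicator (1 : Ω → ℝ≥0∞) ω := by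
      intro ω
      rw [ENNReal.rpow_two, sq, hf_def]
      rw [Finset.sum_mul_sum]
      refine Finset.sum_congr rfl fun i _ => Finset.sum_congr rfl fun j _ => ?_
      rw [← Set.inter_indicator_mul]
      norm_num
      rfl
    simp_rw [h1]
    rw [lintegral_finset_sum _ (fun i _ => Finset.measurable_sum _
      (fun j _ => (measurable_one).indicator ((hmeas i).inter (hmeas j))))]
    refine Finset.sum_congr rfl fun i _ => ?_
    rw [lintegral_finset_sum _ (fun j _ => (measurable_one).indicator ((hmeas i).inter (hmeas j)))]
    exact Finset.sum_congr rfl fun j _ => lintegral_indicator_one ((hmeas i).inter (hmeas j))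
  -- bound ∫ f² ≤ s + s * s
  have hT_le : ∫⁻ ω, f ω ^ (2 : ℝ) ∂μ ≤ s + s * s := by
    rw [hint_f2]
    have step : ∀ i j : Fin m, μ (E i ∩ E j) ≤
        (if i = j then μ (E i) else 0) + μ (E i) * μ (E j) := by
      intro i j
      by_cases h : i = j
      · subst h
        simp [Set.inter_self]
      · rw [hpind i j h]
        simp [h]
    calc ∑ i, ∑ j, μ (E i ∩ E j)
        ≤ ∑ i, ∑ j, ((if i = j then μ (E i) else 0) + μ (E i) * μ (E j)) := by
          exact Finset.sum_le_sum fun i _ => Finset.sum_le_sum fun j _ => step i j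
      _ = s + s * s := by
          simp_rw [Finset.sum_add_distrib]
          congr 1
          · simp [hs_def]
          · rw [hs_def, Finset.sum_mul_sum]
  -- ∫ g² = μ A
  have hint_g2 : ∫⁻ ω, g ω ^ (2 : ℝ) ∂μ = μ A := by
    have : ∀ ω, g ω ^ (2 : ℝ) = g ω := by
      intro ω
      by_cases hω : ω ∈ A
      · simp [hg_def, Set.indicator_of_mem hω]
      · simp [hg_def, Set.indicator_of_notMem hω, ENNReal.zero_rpow_of_pos]
    simp_rw [this]
    exact lintegral_indicator_one hAmeas
  -- Hölder / Cauchy–Schwarz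
  have hconj : Real.HolderConjugate 2 2 := ⟨by norm_num, by norm_num, by norm_num⟩
  have hCS := ENNReal.lintegral_mul_le_Lp_mul_Lq μ hconj hfmeas.aemeasurable
    hgmeas.aemeasurable
  rw [hint_g2] at hCS
  have hCS' : s ≤ ((s + s * s) * μ A) ^ (1 / 2 : ℝ) := by
    have h0 : s = ∫⁻ ω, (f * g) ω ∂μ := by
      rw [← hint_f]; exact lintegral_congr fun ω => hfg ω
    rw [ENNReal.mul_rpow_of_nonneg _ _ (by norm_num : (0:ℝ) ≤ 1/2)]
    calc s = ∫⁻ ω, (f * g) ω ∂μ := h0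
      _ ≤ (∫⁻ ω, f ω ^ (2:ℝ) ∂μ) ^ (1/2 : ℝ) * (μ A) ^ (1/2 : ℝ) := hCS
      _ ≤ (s + s * s) ^ (1/2 : ℝ) * (μ A) ^ (1/2 : ℝ) := by
          gcongr
  -- square both sides
  have key : s * s ≤ (s + s * s) * μ A := by
    have := ENNReal.rpow_le_rpow hCS' (by norm_num : (0:ℝ) ≤ 2)
    rwa [← ENNReal.rpow_mul, one_div, inv_mul_cancel₀ (by norm_num : (2:ℝ) ≠ 0),
      ENNReal.rpow_one, ENNReal.rpow_two, sq] at this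
  have hs_ne_top : s ≠ ⊤ := by
    refine ne_top_of_le_ne_top (by simp : ((m : ℝ≥0∞)) ≠ ⊤) ?_
    calc s ≤ ∑ _i : Fin m, (1 : ℝ≥0∞) := Finset.sum_le_sum fun i _ => prob_le_one
      _ = (m : ℝ≥0∞) := by simp
  -- finish by cases on min
  rcases le_total s 1 with hs1 | hs1
  · rw [min_eq_right hs1]
    by_cases hs0 : s = 0
    · simp [hs0]
    have h2 : s * s ≤ s * (2 * μ A) := by
      calc s * s ≤ (s + s * s) * μ A := key
        _ ≤ (s + s) * μ A := by
            gcongr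
            exact mul_le_of_le_one_right zero_le hs1
        _ = s * (2 * μ A) := by ring
    have h3 : s ≤ 2 * μ A := by
      rwa [ENNReal.mul_le_mul_iff_right hs0 hs_ne_top] at h2
    calc (1 / 2 : ℝ≥0∞) * s ≤ (1 / 2) * (2 * μ A) := by gcongr
      _ = μ A := by
          rw [← mul_assoc, one_div, ENNReal.inv_mul_cancel (by norm_num) (by norm_num), one_mul]
  · rw [min_eq_left hs1]
    have hss0 : s * s ≠ 0 := by
      have : s ≠ 0 := fun h => by simp [h] at hs1
      exact mul_ne_zero this this
    have hss_ne_top : s * s ≠ ⊤ := ENNReal.mul_ne_top hs_ne_top hs_ne_top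
    have h2 : s * s * 1 ≤ s * s * (2 * μ A) := by
      calc s * s * 1 = s * s := by ring
        _ ≤ (s + s * s) * μ A := key
        _ ≤ (s * s + s * s) * μ A := by
            gcongr
            exact le_mul_of_one_le_left zero_le hs1
        _ = s * s * (2 * μ A) := by ring
    have h3 : (1 : ℝ≥0∞) ≤ 2 * μ A := by
      rwa [ENNReal.mul_le_mul_iff_right hss0 hss_ne_top] at h2
    calc (1 / 2 : ℝ≥0∞) * 1 ≤ (1 / 2) * (2 * μ A) := by gcongr
      _ = μ A := by
          rw [← mul_assoc, one_div, ENNReal.inv_mul_cancel (by norm_num) (by norm_num), one_mul]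
end

section
/- De Caen's bound: for any finite collection of events E_1,...,E_m with positive probabilities, P(⋃_i E_i) ≥ Σ_i P(E_i)²/(Σ_j P(E_i ∩ E_j)). -/
open MeasureTheory ENNReal

theorem deCaen_bound
    {Ω : Type*} [MeasurableSpace Ω] (μ : Measure Ω) [IsProbabilityMeasure μ]
    (m : ℕ) (E : Fin m → Set Ω) (hmeas : ∀ i, MeasurableSet (E i))
    (hpos : ∀ i, 0 < μ (E i)) :
    μ (⋃ i, E i) ≥ ∑ i, (μ (E i)) ^ 2 / (∑ j, μ (E i ∩ E j)) := by
  classical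
  set D : Ω → ℝ≥0∞ := fun ω => ∑ j, (E j).indicator 1 ω with hDdef
  have hDmeas : Measurable D :=
    Finset.measurable_sum _ fun j _ => measurable_const.indicator (hmeas j)
  have hDle : ∀ ω, D ω ≤ (m : ℝ≥0∞) := by
    intro ω
    calc D ω ≤ ∑ _j : Fin m, 1 := by
          refine Finset.sum_le_sum fun j _ => ?_
          by_cases h : ω ∈ E j <;> simp [Set.indicator, h]
      _ = (m : ℝ≥0∞) := by simp
  have hDne : ∀ ω, D ω ≠ ∞ := fun ω =>
    ((hDle ω).trans_lt (ENNReal.natCast_lt_top m)).ne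
  have hDge : ∀ i ω, ω ∈ E i → 1 ≤ D ω := by
    intro i ω hω
    have := Finset.single_le_sum (f := fun j => (E j).indicator (1 : Ω → ℝ≥0∞) ω)
      (fun j _ => zero_le) (Finset.mem_univ i)
    simpa [Set.indicator_of_mem hω] using this
  -- Fact A
  have hA : ∀ i, ∑ j, μ (E i ∩ E j) = ∫⁻ ω in E i, D ω ∂μ := by
    intro i
    simp only [hDdef]
    rw [lintegral_finset_sum (f := fun j => (E j).indicator (1 : Ω → ℝ≥0∞)) _
      fun j _ => measurable_const.indicator (hmeas j)]
    refine Finset.sum_congr rfl fun j _ => ?_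
    rw [lintegral_indicator (hmeas j) _]
    simp only [Pi.one_apply]
    rw [setLIntegral_one, Measure.restrict_apply (hmeas j), Set.inter_comm]
  -- Fact C
  have hC : ∑ i, ∫⁻ ω in E i, (D ω)⁻¹ ∂μ = μ (⋃ i, E i) := by
    have h1 : ∀ i : Fin m, ∫⁻ ω in E i, (D ω)⁻¹ ∂μ
        = ∫⁻ ω, (E i).indicator 1 ω * (D ω)⁻¹ ∂μ := by
      intro i
      rw [← lintegral_indicator (hmeas i) _]
      refine lintegral_congr fun ω => ?_
      by_cases h : ω ∈ E i <;> simp [Set.indicator, h]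
    simp_rw [h1]
    rw [← lintegral_finset_sum (f := fun i ω => (E i).indicator (1 : Ω → ℝ≥0∞) ω * (D ω)⁻¹) _
      fun i _ => (measurable_const.indicator (hmeas i)).mul hDmeas.inv]
    have h2 : ∀ ω, ∑ i, (E i).indicator 1 ω * (D ω)⁻¹
        = (⋃ i, E i).indicator 1 ω := by
      intro ω
      rw [← Finset.sum_mul]
      by_cases h : ω ∈ ⋃ i, E i
      · obtain ⟨i, hi⟩ := Set.mem_iUnion.mp h
        have h0 : D ω ≠ 0 := fun h0 => by simpa [h0] using hDge i ω hi
        rw [show (∑ j, (E j).indicator (1 : Ω → ℝ≥0∞) ω) = D ω from rfl,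
          ENNReal.mul_inv_cancel h0 (hDne ω), Set.indicator_of_mem h]
        rfl
      · have h0 : D ω = 0 := by
          rw [hDdef]
          refine Finset.sum_eq_zero fun j _ => ?_
          have : ω ∉ E j := fun hj => h (Set.mem_iUnion.mpr ⟨j, hj⟩)
          simp [Set.indicator_of_notMem this]
        rw [show (∑ j, (E j).indicator (1 : Ω → ℝ≥0∞) ω) = D ω from rfl, h0,
          Set.indicator_of_notMem h, zero_mul]
    simp_rw [h2]
    rw [lintegral_indicator (MeasurableSet.iUnion fun i => hmeas i) _]
    simp only [Pi.one_apply]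
    rw [setLIntegral_one]
  -- Fact B : Cauchy-Schwarz
  have hB : ∀ i, μ (E i) ^ 2 ≤ (∫⁻ ω in E i, D ω ∂μ) * (∫⁻ ω in E i, (D ω)⁻¹ ∂μ) := by
    intro i
    have key := lintegral_mul_norm_pow_le (μ := μ.restrict (E i))
      hDmeas.aemeasurable hDmeas.inv.aemeasurable
      (p := (1/2 : ℝ)) (q := (1/2 : ℝ)) (by norm_num) (by norm_num) (by norm_num)
    have hleft : ∫⁻ ω in E i, D ω ^ (1/2 : ℝ) * (D ω)⁻¹ ^ (1/2 : ℝ) ∂μ = μ (E i) := by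
      rw [setLIntegral_congr_fun (hmeas i) (fun ω hω => ?_), setLIntegral_one]
      have h0 : D ω ≠ 0 := fun h0 => by simpa [h0] using hDge i ω hω
      rw [← ENNReal.mul_rpow_of_nonneg _ _ (by norm_num : (0:ℝ) ≤ 1/2),
        ENNReal.mul_inv_cancel h0 (hDne ω), ENNReal.one_rpow]
    simp only [Pi.inv_apply] at key
    rw [hleft] at key
    calc μ (E i) ^ 2
        ≤ ((∫⁻ ω in E i, D ω ∂μ) ^ (1/2:ℝ) * (∫⁻ ω in E i, (D ω)⁻¹ ∂μ) ^ (1/2:ℝ)) ^ 2 :=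
          pow_le_pow_left₀ zero_le key 2
      _ = (∫⁻ ω in E i, D ω ∂μ) * (∫⁻ ω in E i, (D ω)⁻¹ ∂μ) := by
          rw [mul_pow, ← ENNReal.rpow_natCast (_ ^ (1/2:ℝ)) 2,
            ← ENNReal.rpow_natCast (_ ^ (1/2:ℝ)) 2,
            ← ENNReal.rpow_mul, ← ENNReal.rpow_mul]
          norm_num
  -- assemble
  rw [ge_iff_le, ← hC]
  refine Finset.sum_le_sum fun i _ => ?_
  rw [hA i]
  have hb0 : (∫⁻ ω in E i, D ω ∂μ) ≠ 0 := by
    intro h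
    have : μ (E i) ≤ ∫⁻ ω in E i, D ω ∂μ := by
      rw [← setLIntegral_one]
      exact setLIntegral_mono hDmeas fun ω hω => hDge i ω hω
    rw [h, le_zero_iff] at this
    exact (hpos i).ne' this
  have hbt : (∫⁻ ω in E i, D ω ∂μ) ≠ ∞ := by
    have : (∫⁻ ω in E i, D ω ∂μ) ≤ ∫⁻ _ω in E i, (m : ℝ≥0∞) ∂μ :=
      lintegral_mono fun ω => hDle ω
    refine (this.trans_lt ?_).ne
    rw [setLIntegral_const]
    exact ENNReal.mul_lt_top (ENNReal.natCast_lt_top m) (measure_lt_top _ _)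
  rw [ENNReal.div_le_iff hb0 hbt]
  calc μ (E i) ^ 2 ≤ (∫⁻ ω in E i, D ω ∂μ) * (∫⁻ ω in E i, (D ω)⁻¹ ∂μ) := hB i
    _ = (∫⁻ ω in E i, (D ω)⁻¹ ∂μ) * (∫⁻ ω in E i, D ω ∂μ) := mul_comm _ _
end

section
/- For a probability distribution P on a finite alphabet, min over distributions Q of [D(Q‖P) − ρ·H(Q)] equals −(1+ρ)·log(Σ_x P(x)^{1/(1+ρ)}), for any ρ ≥ 0. -/
private lemma key_ineq (p q : ℝ) (hp : 0 < p) (hq : 0 ≤ q) :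
    q - p ≤ q * Real.log (q / p) := by
  rcases eq_or_lt_of_le hq with h | h
  · simp [← h]; linarith
  · have hlog := Real.log_le_sub_one_of_pos (show 0 < p / q by positivity)
    have h1 : Real.log (q / p) = - Real.log (p / q) := by
      rw [← Real.log_inv]; congr 1; field_simp
    rw [h1]
    have h2 : q * Real.log (p / q) ≤ p - q := by
      have h3 := mul_le_mul_of_nonneg_left hlog h.le
      have h4 : q * (p / q - 1) = p - q := by field_simp
      linarith
    nlinarith [h2]

private lemma pointwise_ident (c Z ρ p q : ℝ) (hc : c = 1 + ρ) (hcpos : 0 < c)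
    (hZ : 0 < Z) (hp : 0 < p) (hq : 0 ≤ q) :
    q * Real.log (q / p) + ρ * (q * Real.log q)
      = c * (q * Real.log (q / (p ^ (1 / c) / Z))) - c * Real.log Z * q := by
  rcases eq_or_lt_of_le hq with h | h
  · simp [← h]
  · have hr : 0 < p ^ (1 / c) / Z := by positivity
    rw [Real.log_div (ne_of_gt h) (ne_of_gt hr), Real.log_div (ne_of_gt h) (ne_of_gt hp),
      Real.log_div (ne_of_gt (Real.rpow_pos_of_pos hp _)) (ne_of_gt hZ),
      Real.log_rpow hp]
    have hcne : c ≠ 0 := ne_of_gt hcpos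
    field_simp
    ring_nf
    rw [hc]; ring

theorem min_kl_minus_rho_entropy {X : Type*} [Fintype X] [Nonempty X]
    (P : X → ℝ) (hP0 : ∀ x, 0 < P x) (hP1 : ∑ x, P x = 1) (ρ : ℝ) (hρ : 0 ≤ ρ) :
    IsLeast
      {v : ℝ | ∃ Q : X → ℝ, (∀ x, 0 ≤ Q x) ∧ (∑ x, Q x = 1) ∧
        v = (∑ x, Q x * Real.log (Q x / P x)) - ρ * (-∑ x, Q x * Real.log (Q x))}
      (-(1 + ρ) * Real.log (∑ x, P x ^ (1 / (1 + ρ)))) := by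
  have hc : (0:ℝ) < 1 + ρ := by linarith
  set c := 1 + ρ with hcdef
  set Z := ∑ x, P x ^ (1 / c) with hZdef
  have hZpos : 0 < Z :=
    Finset.sum_pos (fun x _ => Real.rpow_pos_of_pos (hP0 x) _) Finset.univ_nonempty
  -- the general rewriting of the objective
  have rewr : ∀ Q : X → ℝ, (∀ x, 0 ≤ Q x) → (∑ x, Q x = 1) →
      (∑ x, Q x * Real.log (Q x / P x)) - ρ * (-∑ x, Q x * Real.log (Q x))
        = c * (∑ x, Q x * Real.log (Q x / (P x ^ (1 / c) / Z))) - c * Real.log Z := by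
    intro Q hQ0 hQ1
    have : (∑ x, Q x * Real.log (Q x / P x)) - ρ * (-∑ x, Q x * Real.log (Q x))
        = ∑ x, (Q x * Real.log (Q x / P x) + ρ * (Q x * Real.log (Q x))) := by
      rw [Finset.sum_add_distrib, ← Finset.mul_sum]; ring
    rw [this]
    have : ∑ x, (Q x * Real.log (Q x / P x) + ρ * (Q x * Real.log (Q x)))
        = ∑ x, (c * (Q x * Real.log (Q x / (P x ^ (1 / c) / Z))) - c * Real.log Z * Q x) := by
      apply Finset.sum_congr rfl
      intro x _
      exact pointwise_ident c Z ρ (P x) (Q x) hcdef hc hZpos (hP0 x) (hQ0 x)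
    rw [this, Finset.sum_sub_distrib, ← Finset.mul_sum, ← Finset.mul_sum, hQ1, mul_one]
  constructor
  · -- membership: Q x = P x ^ (1/c) / Z
    refine ⟨fun x => P x ^ (1 / c) / Z, fun x => le_of_lt (div_pos (Real.rpow_pos_of_pos (hP0 x) _) hZpos), ?_, ?_⟩
    · rw [← Finset.sum_div, ← hZdef, div_self (ne_of_gt hZpos)]
    · rw [rewr _ (fun x => le_of_lt (div_pos (Real.rpow_pos_of_pos (hP0 x) _) hZpos))
        (by rw [← Finset.sum_div, ← hZdef, div_self (ne_of_gt hZpos)])]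
      have : ∀ x : X, (P x ^ (1 / c) / Z) * Real.log ((P x ^ (1 / c) / Z) / (P x ^ (1 / c) / Z)) = 0 := by
        intro x
        rw [div_self (ne_of_gt (div_pos (Real.rpow_pos_of_pos (hP0 x) _) hZpos))]
        simp
      rw [Finset.sum_congr rfl (fun x _ => this x)]
      simp
  · -- lower bound
    rintro v ⟨Q, hQ0, hQ1, rfl⟩
    rw [rewr Q hQ0 hQ1]
    have hsum : 0 ≤ ∑ x, Q x * Real.log (Q x / (P x ^ (1 / c) / Z)) := by
      have : ∑ x, (Q x - P x ^ (1 / c) / Z) ≤ ∑ x, Q x * Real.log (Q x / (P x ^ (1 / c) / Z)) :=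
        Finset.sum_le_sum (fun x _ => key_ineq _ _ (div_pos (Real.rpow_pos_of_pos (hP0 x) _) hZpos) (hQ0 x))
      have h0 : ∑ x, (Q x - P x ^ (1 / c) / Z) = 0 := by
        rw [Finset.sum_sub_distrib, hQ1, ← Finset.sum_div, ← hZdef, div_self (ne_of_gt hZpos)]
        ring
      linarith
    nlinarith [hsum]
end

section
/- The minimizer in min_Q [D(Q‖P) − ρ·H(Q)] over probability distributions Q on a finite alphabet is the tilted distribution Q*(x) = P(x)^{1/(1+ρ)} / Σ_{x'} P(x')^{1/(1+ρ)}, for ρ ≥ 0. -/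
theorem tilted_is_minimizer {X : Type*} [Fintype X] [Nonempty X]
    (P : X → ℝ) (hP0 : ∀ x, 0 < P x) (hP1 : ∑ x, P x = 1) (ρ : ℝ) (hρ : 0 ≤ ρ)
    (Qstar : X → ℝ)
    (hQstar : ∀ x, Qstar x = P x ^ (1 / (1 + ρ)) / ∑ x', P x' ^ (1 / (1 + ρ))) :
    ∀ Q : X → ℝ, (∀ x, 0 ≤ Q x) → (∑ x, Q x = 1) →
      (∑ x, Qstar x * Real.log (Qstar x / P x)) - ρ * (-∑ x, Qstar x * Real.log (Qstar x)) ≤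
      (∑ x, Q x * Real.log (Q x / P x)) - ρ * (-∑ x, Q x * Real.log (Q x)) := by
  intro Q hQ0 hQ1
  set Z : ℝ := ∑ x', P x' ^ (1 / (1 + ρ)) with hZdef
  have hρ1 : (0:ℝ) < 1 + ρ := by linarith
  have hZpos : 0 < Z :=
    Finset.sum_pos (fun x _ => Real.rpow_pos_of_pos (hP0 x) _) Finset.univ_nonempty
  have hQspos : ∀ x, 0 < Qstar x := fun x => by
    rw [hQstar]; exact div_pos (Real.rpow_pos_of_pos (hP0 x) _) hZpos
  have hQssum : ∑ x, Qstar x = 1 := by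
    simp only [hQstar]
    rw [← Finset.sum_div, ← hZdef, div_self (ne_of_gt hZpos)]
  have hlogQs : ∀ x, Real.log (Qstar x)
      = (1/(1+ρ)) * Real.log (P x) - Real.log Z := by
    intro x
    rw [hQstar, Real.log_div (ne_of_gt (Real.rpow_pos_of_pos (hP0 x) _)) (ne_of_gt hZpos), Real.log_rpow (hP0 x)]
  -- key identity for any distribution R
  have key : ∀ R : X → ℝ, (∀ x, 0 ≤ R x) → ∑ x, R x = 1 →
      (∑ x, R x * Real.log (R x / P x)) - ρ * (-∑ x, R x * Real.log (R x))
        = (1+ρ) * (∑ x, R x * Real.log (R x / Qstar x)) - (1+ρ) * Real.log Z := by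
    intro R hR0 hR1
    have h1 : ∀ x ∈ Finset.univ, R x * Real.log (R x / P x) + ρ * (R x * Real.log (R x))
        + R x * ((1+ρ) * Real.log Z)
        = (1+ρ) * (R x * Real.log (R x / Qstar x)) := by
      intro x _
      rcases eq_or_lt_of_le (hR0 x) with h | h
      · simp [← h]
      · rw [Real.log_div (ne_of_gt h) (ne_of_gt (hP0 x)),
            Real.log_div (ne_of_gt h) (ne_of_gt (hQspos x)), hlogQs x]
        field_simp
        ring
    have hsum := Finset.sum_congr rfl h1
    rw [Finset.sum_add_distrib, Finset.sum_add_distrib, ← Finset.mul_sum,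
        ← Finset.sum_mul, hR1, one_mul, ← Finset.mul_sum] at hsum
    linarith
  rw [key Q hQ0 hQ1, key Qstar (fun x => le_of_lt (hQspos x)) hQssum]
  have hQQ : ∑ x, Qstar x * Real.log (Qstar x / Qstar x) = 0 :=
    Finset.sum_eq_zero fun x _ => by
      rw [div_self (ne_of_gt (hQspos x)), Real.log_one, mul_zero]
  -- Gibbs inequality
  have gibbs : 0 ≤ ∑ x, Q x * Real.log (Q x / Qstar x) := by
    have h2 : ∀ x ∈ Finset.univ, -(Q x * Real.log (Q x / Qstar x)) ≤ Qstar x - Q x := by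
      intro x _
      rcases eq_or_lt_of_le (hQ0 x) with h | h
      · simp [← h]; exact le_of_lt (hQspos x)
      · have hlog := Real.log_le_sub_one_of_pos (div_pos (hQspos x) h)
        have hneg : -(Q x * Real.log (Q x / Qstar x))
            = Q x * Real.log (Qstar x / Q x) := by
          rw [Real.log_div (ne_of_gt h) (ne_of_gt (hQspos x)),
              Real.log_div (ne_of_gt (hQspos x)) (ne_of_gt h)]
          ring
        rw [hneg]
        calc Q x * Real.log (Qstar x / Q x) ≤ Q x * (Qstar x / Q x - 1) :=
              mul_le_mul_of_nonneg_left hlog h.le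
          _ = Qstar x - Q x := by field_simp
    have hs := Finset.sum_le_sum h2
    rw [Finset.sum_neg_distrib, Finset.sum_sub_distrib, hQssum, hQ1] at hs
    linarith
  rw [hQQ]
  nlinarith [mul_nonneg hρ1.le gibbs]
end

section
/- The number of elements in a type class of sequences of length n over a finite alphabet with empirical distribution P̂ satisfies |T(P̂)| ≤ 2^{n·H(P̂)}, where H(P̂) is the Shannon entropy (base 2) of the empirical distribution. -/
open Finset Real

theorem type_class_card_le {X : Type*} [Fintype X] [DecidableEq X]
    (n : ℕ) (hn : 0 < n) (cnt : X → ℕ) (hcnt : ∑ x, cnt x = n) :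
    ((Finset.univ.filter (fun s : Fin n → X =>
        ∀ x, (Finset.univ.filter (fun i => s i = x)).card = cnt x)).card : ℝ) ≤
      2 ^ ((n : ℝ) * (-∑ x, ((cnt x : ℝ) / n) * Real.logb 2 ((cnt x : ℝ) / n))) := by
  set T := Finset.univ.filter (fun s : Fin n → X =>
        ∀ x, (Finset.univ.filter (fun i => s i = x)).card = cnt x) with hT
  set p : X → ℝ := fun x => (cnt x : ℝ) / n with hp
  have hn0 : (n : ℝ) ≠ 0 := Nat.cast_ne_zero.mpr hn.ne'
  have hnpos : (0:ℝ) < n := by exact_mod_cast hn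
  have hppos : ∀ x, 0 < cnt x → 0 < p x := fun x h =>
    div_pos (by exact_mod_cast h) hnpos
  have hPpos : 0 < ∏ x, p x ^ cnt x := by
    apply Finset.prod_pos
    intro x _
    rcases Nat.eq_zero_or_pos (cnt x) with h | h
    · simp [h]
    · exact pow_pos (hppos x h) _
  -- each sequence in T has "probability" ∏ x, p x ^ cnt x
  have hprodT : ∀ s ∈ T, ∏ i : Fin n, p (s i) = ∏ x, p x ^ cnt x := by
    intro s hs
    rw [hT, Finset.mem_filter] at hs
    have hfib := Finset.prod_fiberwise (Finset.univ : Finset (Fin n)) s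
      (fun i => p (s i))
    rw [← hfib]
    refine Finset.prod_congr rfl fun x _ => ?_
    have : ∏ i ∈ Finset.univ.filter (fun i => s i = x), p (s i)
        = ∏ i ∈ Finset.univ.filter (fun i => s i = x), p x := by
      refine Finset.prod_congr rfl fun i hi => ?_
      rw [(Finset.mem_filter.mp hi).2]
    rw [this, Finset.prod_const, hs.2 x]
  -- total probability is 1
  have hsum1 : ∑ x : X, p x = 1 := by
    simp only [hp, ← Finset.sum_div]
    rw [show ∑ x : X, (cnt x : ℝ) = (n : ℝ) by exact_mod_cast hcnt]
    exact div_self hn0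
  have key : (T.card : ℝ) * ∏ x, p x ^ cnt x ≤ 1 := by
    have h1 : (1:ℝ) = ∑ s : Fin n → X, ∏ i : Fin n, p (s i) := by
      have := Finset.prod_univ_sum (fun _ : Fin n => (Finset.univ : Finset X))
        (fun _ x => p x)
      rw [Fintype.piFinset_univ] at this
      rw [← this]
      simp [hsum1]
    rw [h1]
    have : (T.card : ℝ) * ∏ x, p x ^ cnt x = ∑ s ∈ T, ∏ i : Fin n, p (s i) := by
      rw [Finset.sum_congr rfl hprodT, Finset.sum_const, nsmul_eq_mul]
    rw [this]
    apply Finset.sum_le_sum_of_subset_of_nonneg (Finset.subset_univ T)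
    intro s _ _
    apply Finset.prod_nonneg
    intro i _
    exact div_nonneg (Nat.cast_nonneg _) hnpos.le
  -- identify the RHS with the inverse probability
  have hrhs : (2:ℝ) ^ ((n : ℝ) * (-∑ x, p x * Real.logb 2 (p x)))
      = (∏ x, p x ^ cnt x)⁻¹ := by
    have hlog : Real.logb 2 (∏ x, p x ^ cnt x) = ∑ x, (cnt x : ℝ) * Real.logb 2 (p x) := by
      rw [Real.logb_prod]
      · refine Finset.sum_congr rfl fun x _ => ?_
        rw [Real.logb_pow]
      · intro x _
        rcases Nat.eq_zero_or_pos (cnt x) with h | h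
        · simp [h]
        · exact (pow_pos (hppos x h) _).ne'
    have hexp : (n : ℝ) * (-∑ x, p x * Real.logb 2 (p x))
        = -Real.logb 2 (∏ x, p x ^ cnt x) := by
      rw [hlog, mul_neg, neg_inj, Finset.mul_sum]
      refine Finset.sum_congr rfl fun x _ => ?_
      rw [← mul_assoc, hp]
      rw [mul_div_cancel₀ _ hn0]
    rw [hexp, Real.rpow_neg (by norm_num : (0:ℝ) ≤ 2), Real.rpow_logb
      (by norm_num) (by norm_num) hPpos]
  calc (T.card : ℝ) ≤ (∏ x, p x ^ cnt x)⁻¹ := by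
        rw [← one_div]
        exact (le_div_iff₀ hPpos).mpr key
      _ = _ := hrhs.symm
end
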